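/- Let N ≥ 2 be even. In M_N × M_N with the tensor-product operators (1 ≤ l ≤ N by the tensor rule, l = 0 by the super rule), the elements x ⊗ y satisfying f̃_i(x ⊗ y) = 0 for all 0 ≤ i ≤ N are exactly the following: ((+,…,+), 0) ⊗ ((−,…,−), 2k) for each k ∈ ℤ_{≥0}; ((+,…,+), 0) ⊗ ((+^{2i}, −^{N−2i}), 0) for each 1 ≤ i ≤ (N−2)/2, where (+^{2i}, −^{N−2i}) has first 2i entries + and last N−2i entries −; and ((+,…,+), 0) ⊗ ((+,…,+), 0). -/

import Mathlib

namespace CrystalPaper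

/-- A sign sequence of length `N`: `true` codes `+`, `false` codes `−`. -/
abbrev Seq (N : ℕ) := Fin N → Bool

/-- The constant sequence `(+,…,+)`. -/
def top (N : ℕ) : Seq N := fun _ => true

/-- The constant sequence `(−,…,−)`. -/
def bot (N : ℕ) : Seq N := fun _ => false

/-- The sequence `(+^k, −^{N−k})` (first `k` entries `+`, the rest `−`). -/
def lowSeq (N k : ℕ) : Seq N := fun i => decide ((i : ℕ) < k)

/-- The number of `−` entries of a sign sequence. -/
def minusCount (N : ℕ) (b : Seq N) : ℕ :=
  (Finset.univ.filter (fun i => b i = false)).card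

/-- `B_sp^+`: sign sequences with an even number of `−` entries. -/
def BspPlus (N : ℕ) (b : Seq N) : Prop := Even (minusCount N b)

/-- `B_sp^−`: sign sequences with an odd number of `−` entries. -/
def BspMinus (N : ℕ) (b : Seq N) : Prop := Odd (minusCount N b)

/-- The type-`D_N` Kashiwara raising operator `ẽ_l`, labels `1 ≤ l ≤ N`
(`none` codes `0`).  For `1 ≤ l ≤ N−1` it replaces `(b_l, b_{l+1}) = (+,−)` by `(−,+)`;
`ẽ_N` replaces `(b_{N−1}, b_N) = (+,+)` by `(−,−)`. -/
def eD (N l : ℕ) (b : Seq N) : Option (Seq N) :=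
  if h : 1 ≤ l ∧ l + 1 ≤ N then
    let i : Fin N := ⟨l - 1, by omega⟩
    let j : Fin N := ⟨l, by omega⟩
    if b i = true ∧ b j = false then
      some (Function.update (Function.update b i false) j true)
    else none
  else if h2 : l = N ∧ 2 ≤ N then
    let i : Fin N := ⟨N - 2, by omega⟩
    let j : Fin N := ⟨N - 1, by omega⟩
    if b i = true ∧ b j = true then
      some (Function.update (Function.update b i false) j false)
    else none
  else none

/-- The type-`D_N` Kashiwara lowering operator `f̃_l`, labels `1 ≤ l ≤ N`.
For `1 ≤ l ≤ N−1` it replaces `(b_l, b_{l+1}) = (−,+)` by `(+,−)`;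
`f̃_N` replaces `(b_{N−1}, b_N) = (−,−)` by `(+,+)`. -/
def fD (N l : ℕ) (b : Seq N) : Option (Seq N) :=
  if h : 1 ≤ l ∧ l + 1 ≤ N then
    let i : Fin N := ⟨l - 1, by omega⟩
    let j : Fin N := ⟨l, by omega⟩
    if b i = false ∧ b j = true then
      some (Function.update (Function.update b i true) j false)
    else none
  else if h2 : l = N ∧ 2 ≤ N then
    let i : Fin N := ⟨N - 2, by omega⟩
    let j : Fin N := ⟨N - 1, by omega⟩
    if b i = false ∧ b j = false then
      some (Function.update (Function.update b i true) j true)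
    else none
  else none

/-- `n`-fold iteration of a partial operator. -/
def iterOp {σ : Type*} (f : σ → Option σ) : ℕ → σ → Option σ
  | 0, x => some x
  | n + 1, x => (f x).bind (iterOp f n)

/-- `max {n ≥ 0 : f^n x ≠ 0}`, as a supremum in `ℕ`.  Used for the string
lengths `ε_l(x) = max{n : ẽ_l^n x ≠ 0}` and `φ_l(x) = max{n : f̃_l^n x ≠ 0}`. -/
noncomputable def opMax {σ : Type*} (f : σ → Option σ) (x : σ) : ℕ :=
  sSup {n | iterOp f n x ≠ none}

/-- Elements of the combinatorial model of `B(−ω_N)` for `U_q(D(N,1))`: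
pairs of a sign sequence and a non-negative integer. -/
abbrev MSeq (N : ℕ) := Seq N × ℕ

/-- Membership in the model `M_N` of `B(−ω_N)`: the sign sequence lies in `B_sp^+`
if the integer is even and in `B_sp^−` if it is odd. -/
def memMD (N : ℕ) (x : MSeq N) : Prop :=
  if x.2 % 2 = 0 then BspPlus N x.1 else BspMinus N x.1

/-- Membership in the model `M'_N` of `B(−ω_{N−1})`: parities swapped. -/
def memMD' (N : ℕ) (x : MSeq N) : Prop :=
  if x.2 % 2 = 0 then BspMinus N x.1 else BspPlus N x.1

/-- The operators `ẽ_l`, `0 ≤ l ≤ N`, on the model: for `l ≥ 1` they act on the sign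
sequence; `ẽ_0(b,k) = ((+,b_2,…,b_N), k+1)` if `b_1 = −`, and `0` otherwise. -/
def eSD (N l : ℕ) (x : MSeq N) : Option (MSeq N) :=
  if l = 0 then
    if h : 1 ≤ N then
      if x.1 ⟨0, h⟩ = false then some (Function.update x.1 ⟨0, h⟩ true, x.2 + 1) else none
    else none
  else (eD N l x.1).map fun b => (b, x.2)

/-- The operators `f̃_l`, `0 ≤ l ≤ N`, on the model: for `l ≥ 1` they act on the sign
sequence; `f̃_0(b,k) = ((−,b_2,…,b_N), k−1)` if `b_1 = +` and `k ≥ 1`, and `0` otherwise. -/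
def fSD (N l : ℕ) (x : MSeq N) : Option (MSeq N) :=
  if l = 0 then
    if h : 1 ≤ N then
      if x.1 ⟨0, h⟩ = true ∧ 1 ≤ x.2 then some (Function.update x.1 ⟨0, h⟩ false, x.2 - 1)
      else none
    else none
  else (fD N l x.1).map fun b => (b, x.2)

/-- `⟨h_0, (b,k)⟩ = k` if `b_1 = +`, and `k + 1` if `b_1 = −`. -/
def hZero (N : ℕ) (x : MSeq N) : ℕ :=
  if h : 1 ≤ N then (if x.1 ⟨0, h⟩ = true then x.2 else x.2 + 1) else x.2

/-- The tensor-product lowering operators on pairs of model elements: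
the super rule for `l = 0` (`f̃_0(x ⊗ y) = x ⊗ f̃_0 y` if `⟨h_0,x⟩ = 0`, and
`f̃_0 x ⊗ y` if `⟨h_0,x⟩ > 0`), and the tensor rule for `1 ≤ l ≤ N`. -/
noncomputable def tfSD (N l : ℕ) (p : MSeq N × MSeq N) : Option (MSeq N × MSeq N) :=
  if l = 0 then
    if hZero N p.1 = 0 then (fSD N 0 p.2).map fun y => (p.1, y)
    else (fSD N 0 p.1).map fun x => (x, p.2)
  else
    if opMax (eSD N l) p.1 < opMax (fSD N l) p.2 then (fSD N l p.2).map fun y => (p.1, y)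
    else (fSD N l p.1).map fun x => (x, p.2)

section Aux

variable {σ : Type*}

lemma iterOp_succ (f : σ → Option σ) (n : ℕ) (x : σ) :
    iterOp f (n + 1) x = (f x).bind (iterOp f n) := rfl

lemma opMax_eq_zero (f : σ → Option σ) (x : σ) (h : f x = none) : opMax f x = 0 := by
  have hset : {n | iterOp f n x ≠ none} = {0} := by
    ext n
    cases n with
    | zero => simp [iterOp]
    | succ m => simp [iterOp_succ, h]
  rw [opMax, hset, csSup_singleton]

lemma iterOp_two_none (f : σ → Option σ) (hs : ∀ a b, f a = some b → f b = none)
    (x : σ) (m : ℕ) : iterOp f (m + 2) x = none := by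
  rw [iterOp_succ]
  cases hfx : f x with
  | none => rfl
  | some x1 =>
    show iterOp f (m + 1) x1 = none
    rw [iterOp_succ, hs x x1 hfx]
    rfl

lemma opMax_le_one (f : σ → Option σ) (hs : ∀ a b, f a = some b → f b = none)
    (x : σ) : opMax f x ≤ 1 := by
  apply csSup_le ⟨0, by simp [iterOp]⟩
  intro n hn
  by_contra hc
  push_neg at hc
  obtain ⟨m, rfl⟩ : ∃ m, n = m + 2 := ⟨n - 2, by omega⟩
  exact hn (iterOp_two_none f hs x m)

lemma opMax_eq_one (f : σ → Option σ) (hs : ∀ a b, f a = some b → f b = none)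
    (x y : σ) (h : f x = some y) : opMax f x = 1 := by
  refine le_antisymm (opMax_le_one f hs x) ?_
  apply le_csSup
  · refine ⟨1, fun n hn => ?_⟩
    by_contra hc
    push_neg at hc
    obtain ⟨m, rfl⟩ : ∃ m, n = m + 2 := ⟨n - 2, by omega⟩
    exact hn (iterOp_two_none f hs x m)
  · show iterOp f 1 x ≠ none
    rw [iterOp_succ, h]
    simp [iterOp]

lemma fD_lt_def (N l : ℕ) (h1 : 1 ≤ l) (h2 : l + 1 ≤ N) (b : Seq N) :
    fD N l b =
      if b ⟨l - 1, by omega⟩ = false ∧ b ⟨l, by omega⟩ = true then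
        some (Function.update (Function.update b ⟨l - 1, by omega⟩ true) ⟨l, by omega⟩ false)
      else none := by
  rw [fD, dif_pos ⟨h1, h2⟩]

lemma fD_N_def (N : ℕ) (hN : 2 ≤ N) (b : Seq N) :
    fD N N b =
      if b ⟨N - 2, by omega⟩ = false ∧ b ⟨N - 1, by omega⟩ = false then
        some (Function.update (Function.update b ⟨N - 2, by omega⟩ true) ⟨N - 1, by omega⟩ true)
      else none := by
  rw [fD, dif_neg (by omega), dif_pos ⟨rfl, hN⟩]

lemma eD_lt_def (N l : ℕ) (h1 : 1 ≤ l) (h2 : l + 1 ≤ N) (b : Seq N) :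
    eD N l b =
      if b ⟨l - 1, by omega⟩ = true ∧ b ⟨l, by omega⟩ = false then
        some (Function.update (Function.update b ⟨l - 1, by omega⟩ false) ⟨l, by omega⟩ true)
      else none := by
  rw [eD, dif_pos ⟨h1, h2⟩]

lemma eD_N_def (N : ℕ) (hN : 2 ≤ N) (b : Seq N) :
    eD N N b =
      if b ⟨N - 2, by omega⟩ = true ∧ b ⟨N - 1, by omega⟩ = true then
        some (Function.update (Function.update b ⟨N - 2, by omega⟩ false) ⟨N - 1, by omega⟩ false)
      else none := by
  rw [eD, dif_neg (by omega), dif_pos ⟨rfl, hN⟩]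

lemma fD_none_iff_lt (N l : ℕ) (h1 : 1 ≤ l) (h2 : l + 1 ≤ N) (b : Seq N) :
    fD N l b = none ↔ (b ⟨l - 1, by omega⟩ = true ∨ b ⟨l, by omega⟩ = false) := by
  rw [fD_lt_def N l h1 h2]
  split_ifs with hc
  · simp only [reduceCtorEq, false_iff]
    rw [hc.1, hc.2]; simp
  · rw [not_and_or, Bool.not_eq_false, Bool.not_eq_true] at hc
    simpa using hc

lemma fD_none_iff_N (N : ℕ) (hN : 2 ≤ N) (b : Seq N) :
    fD N N b = none ↔ (b ⟨N - 2, by omega⟩ = true ∨ b ⟨N - 1, by omega⟩ = true) := by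
  rw [fD_N_def N hN]
  split_ifs with hc
  · simp only [reduceCtorEq, false_iff]
    rw [hc.1, hc.2]; simp
  · rw [not_and_or, Bool.not_eq_false, Bool.not_eq_false] at hc
    simpa using hc

lemma eD_none_iff_lt (N l : ℕ) (h1 : 1 ≤ l) (h2 : l + 1 ≤ N) (b : Seq N) :
    eD N l b = none ↔ (b ⟨l - 1, by omega⟩ = false ∨ b ⟨l, by omega⟩ = true) := by
  rw [eD_lt_def N l h1 h2]
  split_ifs with hc
  · simp only [reduceCtorEq, false_iff]
    rw [hc.1, hc.2]; simp
  · rw [not_and_or, Bool.not_eq_true, Bool.not_eq_false] at hc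
    simpa using hc

lemma fD_string (N l : ℕ) (a b : Seq N) (hab : fD N l a = some b) : fD N l b = none := by
  by_cases h : 1 ≤ l ∧ l + 1 ≤ N
  · rw [fD_lt_def N l h.1 h.2] at hab
    split_ifs at hab with hc
    obtain rfl : _ = b := Option.some_inj.mp hab
    rw [fD_none_iff_lt N l h.1 h.2]
    left
    have hne : (⟨l - 1, by omega⟩ : Fin N) ≠ ⟨l, by omega⟩ := by
      simp only [ne_eq, Fin.mk.injEq]; omega
    rw [Function.update_of_ne hne, Function.update_self]
  · by_cases h2 : l = N ∧ 2 ≤ N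
    · obtain ⟨rfl, hN⟩ := h2
      rw [fD_N_def _ hN] at hab
      split_ifs at hab with hc
      obtain rfl : _ = b := Option.some_inj.mp hab
      rw [fD_none_iff_N _ hN]
      left
      have hne : (⟨l - 2, by omega⟩ : Fin l) ≠ ⟨l - 1, by omega⟩ := by
        simp only [ne_eq, Fin.mk.injEq]; omega
      rw [Function.update_of_ne hne, Function.update_self]
    · rw [fD, dif_neg h, dif_neg h2] at hab
      exact absurd hab (by simp)

lemma eD_string (N l : ℕ) (a b : Seq N) (hab : eD N l a = some b) : eD N l b = none := by
  by_cases h : 1 ≤ l ∧ l + 1 ≤ N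
  · rw [eD_lt_def N l h.1 h.2] at hab
    split_ifs at hab with hc
    obtain rfl : _ = b := Option.some_inj.mp hab
    rw [eD_none_iff_lt N l h.1 h.2]
    left
    have hne : (⟨l - 1, by omega⟩ : Fin N) ≠ ⟨l, by omega⟩ := by
      simp only [ne_eq, Fin.mk.injEq]; omega
    rw [Function.update_of_ne hne, Function.update_self]
  · by_cases h2 : l = N ∧ 2 ≤ N
    · obtain ⟨rfl, hN⟩ := h2
      rw [eD_N_def _ hN] at hab
      split_ifs at hab with hc
      obtain rfl : _ = b := Option.some_inj.mp hab
      rw [eD_N_def _ hN, if_neg]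
      intro hcc
      have hne : (⟨l - 2, by omega⟩ : Fin l) ≠ ⟨l - 1, by omega⟩ := by
        simp only [ne_eq, Fin.mk.injEq]; omega
      rw [Function.update_of_ne hne, Function.update_self] at hcc
      exact absurd hcc.1 (by simp)
    · rw [eD, dif_neg h, dif_neg h2] at hab
      exact absurd hab (by simp)

lemma fSD_string (N l : ℕ) (hl : l ≠ 0) (a b : MSeq N) (hab : fSD N l a = some b) :
    fSD N l b = none := by
  rw [fSD, if_neg hl] at hab ⊢
  rw [Option.map_eq_some_iff] at hab
  obtain ⟨b1, hb1, rfl⟩ := hab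
  rw [fD_string N l a.1 b1 hb1]
  rfl

lemma eSD_string (N l : ℕ) (hl : l ≠ 0) (a b : MSeq N) (hab : eSD N l a = some b) :
    eSD N l b = none := by
  rw [eSD, if_neg hl] at hab ⊢
  rw [Option.map_eq_some_iff] at hab
  obtain ⟨b1, hb1, rfl⟩ := hab
  rw [eD_string N l a.1 b1 hb1]
  rfl

end Aux

section Aux2

lemma mono_of_no_fD (N : ℕ) (b : Seq N)
    (hb : ∀ l (h1 : 1 ≤ l) (h2 : l + 1 ≤ N), (b ⟨l - 1, by omega⟩ = true ∨ b ⟨l, by omega⟩ = false)) :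
    ∀ j (hj : j < N) i (hij : i ≤ j), b ⟨j, hj⟩ = true → b ⟨i, by omega⟩ = true := by
  intro j
  induction j with
  | zero =>
    intro hj i hij ht
    obtain rfl : i = 0 := by omega
    exact ht
  | succ m ih =>
    intro hj i hij ht
    rcases Nat.lt_or_ge i (m + 1) with hlt | hge
    · rcases hb (m + 1) (by omega) (by omega) with h | h
      · exact ih (by omega) i (by omega) h
      · rw [show (⟨m + 1, by omega⟩ : Fin N) = ⟨m + 1, hj⟩ from rfl] at h
        rw [h] at ht
        exact absurd ht (by simp)
    · obtain rfl : i = m + 1 := by omega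
      exact ht

lemma card_filter_le (N c : ℕ) :
    (Finset.univ.filter fun i : Fin N => c ≤ (i : ℕ)).card = N - c := by
  have himg : (Finset.univ.filter fun i : Fin N => c ≤ (i : ℕ)).image Fin.val
      = Finset.Ico c N := by
    ext n
    simp only [Finset.mem_image, Finset.mem_filter, Finset.mem_univ, true_and, Finset.mem_Ico]
    constructor
    · rintro ⟨i, hi, rfl⟩
      exact ⟨hi, i.isLt⟩
    · rintro ⟨h1, h2⟩
      exact ⟨⟨n, h2⟩, h1, rfl⟩
  rw [← Finset.card_image_of_injective _ Fin.val_injective, himg, Nat.card_Ico]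

lemma minusCount_lowSeq (N c : ℕ) : minusCount N (lowSeq N c) = N - c := by
  rw [minusCount, ← card_filter_le N c]
  congr 1
  apply Finset.filter_congr
  intro i _
  simp [lowSeq]

lemma top_eq_lowSeq (N : ℕ) : top N = lowSeq N N := by
  funext i
  simp [top, lowSeq, i.isLt]

lemma bot_eq_lowSeq (N : ℕ) : bot N = lowSeq N 0 := by
  funext i
  simp [bot, lowSeq]

lemma eq_lowSeq (N : ℕ) (b : Seq N)
    (hb : ∀ l (h1 : 1 ≤ l) (h2 : l + 1 ≤ N), (b ⟨l - 1, by omega⟩ = true ∨ b ⟨l, by omega⟩ = false)) :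
    ∃ c ≤ N, b = lowSeq N c := by
  have hmono := mono_of_no_fD N b hb
  by_cases hall : ∀ i : Fin N, b i = true
  · refine ⟨N, le_rfl, funext fun i => ?_⟩
    simp [lowSeq, i.isLt, hall i]
  · push_neg at hall
    have hFne : (Finset.univ.filter fun i : Fin N => b i = false).Nonempty := by
      obtain ⟨i, hi⟩ := hall
      exact ⟨i, by simp [Bool.not_eq_true] at hi; simp [hi]⟩
    set F := Finset.univ.filter fun i : Fin N => b i = false with hF
    set m := F.min' hFne with hm
    have hbm : b m = false := by
      have h := F.min'_mem hFne
      simp only [hF, Finset.mem_filter] at h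
      exact h.2
    refine ⟨m.val, le_of_lt m.isLt, funext fun i => ?_⟩
    rcases lt_or_ge (i : ℕ) (m : ℕ) with h | h
    · have hbi : b i = true := by
        by_contra hbi
        rw [Bool.not_eq_true] at hbi
        have : m ≤ i := F.min'_le i (by simp [hF, hbi])
        omega
      simp [lowSeq, hbi, h]
    · have hbi : b i = false := by
        by_contra hbi
        rw [Bool.not_eq_false] at hbi
        have := hmono i.val i.isLt m.val h (by rw [Fin.eta]; exact hbi)
        rw [Fin.eta] at this
        rw [hbm] at this
        exact absurd this (by simp)
      simp only [lowSeq, hbi]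
      symm
      simp [decide_eq_false_iff_not]
      omega

lemma lowSeq_val (N c : ℕ) (i : Fin N) : lowSeq N c i = decide ((i : ℕ) < c) := rfl

lemma fD_lowSeq_lt (N l c : ℕ) (h1 : 1 ≤ l) (h2 : l + 1 ≤ N) :
    fD N l (lowSeq N c) = none := by
  rw [fD_none_iff_lt N l h1 h2]
  by_cases h : l < c
  · left; simp [lowSeq]; omega
  · right; simp [lowSeq]; omega

lemma fD_top (N l : ℕ) (h1 : 1 ≤ l) (hl : l ≤ N) (hN : 2 ≤ N) : fD N l (top N) = none := by
  rcases Nat.lt_or_ge l N with h | h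
  · rw [fD_none_iff_lt N l h1 (by omega)]
    left; rfl
  · obtain rfl : l = N := by omega
    rw [fD_none_iff_N _ hN]
    left; rfl

lemma eD_top_lt (N l : ℕ) (h1 : 1 ≤ l) (h2 : l + 1 ≤ N) : eD N l (top N) = none := by
  rw [eD_none_iff_lt N l h1 h2]
  right; rfl

lemma eD_top_N (N : ℕ) (hN : 2 ≤ N) :
    eD N N (top N) = some (Function.update (Function.update (top N) ⟨N - 2, by omega⟩ false)
      ⟨N - 1, by omega⟩ false) := by
  rw [eD_N_def _ hN, if_pos ⟨rfl, rfl⟩]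

end Aux2

section Aux3

lemma fSD_ne_zero (N l : ℕ) (hl : l ≠ 0) (y : MSeq N) :
    fSD N l y = (fD N l y.1).map fun b => (b, y.2) := by rw [fSD, if_neg hl]

lemma eSD_ne_zero (N l : ℕ) (hl : l ≠ 0) (y : MSeq N) :
    eSD N l y = (eD N l y.1).map fun b => (b, y.2) := by rw [eSD, if_neg hl]

lemma opMax_fSD_eq_zero (N l : ℕ) (hl : l ≠ 0) (y : MSeq N) (h : fD N l y.1 = none) :
    opMax (fSD N l) y = 0 :=
  opMax_eq_zero _ _ (by rw [fSD_ne_zero N l hl, h]; rfl)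

lemma opMax_eSD_top (N : ℕ) (hN : 2 ≤ N) (k : ℕ) :
    opMax (eSD N N) ((top N, k) : MSeq N) = 1 := by
  exact opMax_eq_one _ (fun a b => eSD_string N N (by omega) a b) _ _
    (by rw [eSD_ne_zero N N (by omega), eD_top_N N hN]; rfl)

lemma tfSD_none_fst (N l : ℕ) (hl : l ≠ 0) (x y : MSeq N)
    (h : tfSD N l (x, y) = none) : fD N l x.1 = none := by
  rw [tfSD, if_neg hl] at h
  dsimp only at h
  split_ifs at h with hcmp
  · rw [Option.map_eq_none_iff] at h
    rw [opMax_eq_zero _ _ h] at hcmp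
    omega
  · rw [Option.map_eq_none_iff, fSD_ne_zero N l hl, Option.map_eq_none_iff] at h
    exact h

lemma tfSD_none_snd (N l : ℕ) (hl : l ≠ 0) (x y : MSeq N) (hx : eSD N l x = none)
    (h : tfSD N l (x, y) = none) : fD N l y.1 = none := by
  by_cases hy : fD N l y.1 = none
  · exact hy
  · exfalso
    obtain ⟨b1, hb1⟩ := Option.ne_none_iff_exists'.mp hy
    have hys : fSD N l y = some (b1, y.2) := by rw [fSD_ne_zero N l hl, hb1]; rfl
    have h1 : opMax (fSD N l) y = 1 :=
      opMax_eq_one _ (fun a b => fSD_string N l hl a b) _ _ hys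
    have h0 : opMax (eSD N l) x = 0 := opMax_eq_zero _ _ hx
    rw [tfSD, if_neg hl] at h
    dsimp only at h
    rw [if_pos (by omega), Option.map_eq_none_iff] at h
    rw [h] at hys
    exact absurd hys (by simp)

lemma tfSD_eq_none (N l : ℕ) (hl : l ≠ 0) (x y : MSeq N) (h1 : fD N l x.1 = none)
    (h2 : ¬ opMax (eSD N l) x < opMax (fSD N l) y) : tfSD N l (x, y) = none := by
  rw [tfSD, if_neg hl]
  dsimp only
  rw [if_neg h2, fSD_ne_zero N l hl, h1]
  rfl

lemma hZero_top (N : ℕ) (hN : 1 ≤ N) (k : ℕ) : hZero N ((top N, k) : MSeq N) = k := by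
  rw [hZero, dif_pos hN]
  rfl

lemma reverse_case (N : ℕ) (hN : 2 ≤ N) (c k : ℕ) (hck : c = 0 ∨ k = 0) :
    ∀ i ≤ N, tfSD N i (((top N, 0) : MSeq N), ((lowSeq N c, k) : MSeq N)) = none := by
  intro i hi
  rcases Nat.eq_zero_or_pos i with rfl | hip
  · rw [tfSD, if_pos rfl]
    dsimp only
    rw [if_pos (hZero_top N (by omega) 0), Option.map_eq_none_iff]
    rw [fSD, if_pos rfl, dif_pos (show 1 ≤ N by omega), if_neg]
    rintro ⟨ht, hk⟩
    rcases hck with rfl | rfl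
    · simp [lowSeq] at ht
    · omega
  · have hi1 : 1 ≤ i := hip
    rcases Nat.lt_or_ge i N with hiN | hiN
    · refine tfSD_eq_none N i (by omega) _ _ (fD_top N i hi1 (by omega) hN) ?_
      rw [opMax_fSD_eq_zero N i (by omega) _ (fD_lowSeq_lt N i c hi1 (by omega))]
      omega
    · obtain rfl : i = N := by omega
      refine tfSD_eq_none _ _ (by omega) _ _ (fD_top _ _ (by omega) le_rfl hN) ?_
      rw [opMax_eSD_top _ hN 0]
      have hle : opMax (fSD i i) ((lowSeq i c, k) : MSeq i) ≤ 1 :=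
        opMax_le_one _ (fun a b => fSD_string _ _ (by omega) a b) _
      omega

end Aux3

/-- For `N ≥ 2` even, the lowest weight elements of `M_N × M_N` (the
model of `B(−ω_N) ⊗ B(−ω_N)` for `U_q(D(N,1))`), i.e. the elements killed by all
tensor-product operators `f̃_i`, `0 ≤ i ≤ N`, are exactly
`((+,…,+),0) ⊗ ((−,…,−),2k)` for `k ∈ ℤ_{≥0}`,
`((+,…,+),0) ⊗ ((+^{2i},−^{N−2i}),0)` for `1 ≤ i ≤ (N−2)/2`, and
`((+,…,+),0) ⊗ ((+,…,+),0)`. -/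
theorem lowest_weight_MD_tensor_MD (N : ℕ) (hN : 2 ≤ N) (hEven : Even N)
    (x y : MSeq N) (hx : memMD N x) (hy : memMD N y) :
    (∀ i, i ≤ N → tfSD N i (x, y) = none) ↔
      (x = (top N, 0) ∧
        ((∃ k, y = (bot N, 2 * k)) ∨
          (∃ i, 1 ≤ i ∧ 2 * i ≤ N - 2 ∧ y = (lowSeq N (2 * i), 0)) ∨
          y = (top N, 0))) := by
  obtain ⟨x1, x2⟩ := x
  obtain ⟨y1, y2⟩ := y
  constructor
  · intro H
    -- Shape of x: no f_l for 1 ≤ l ≤ N-1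
    have hx1 : ∀ l (h1 : 1 ≤ l) (h2 : l + 1 ≤ N),
        ((x1, x2) : MSeq N).1 ⟨l - 1, by omega⟩ = true ∨
          ((x1, x2) : MSeq N).1 ⟨l, by omega⟩ = false := by
      intro l h1 h2
      have h := tfSD_none_fst N l (by omega) _ _ (H l (by omega))
      rwa [fD_none_iff_lt N l h1 h2] at h
    have hxN : fD N N x1 = none := tfSD_none_fst N N (by omega) _ _ (H N le_rfl)
    obtain ⟨c, hcN, hxc⟩ := eq_lowSeq N x1 hx1
    subst hxc
    -- c = N
    have hc_eq : c = N := by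
      by_contra hc
      have hcN' : c < N := by omega
      rw [fD_none_iff_N N hN] at hxN
      have hlast : lowSeq N c ⟨N - 1, by omega⟩ = false := by
        simp [lowSeq]; omega
      have hc2 : N - 2 < c := by
        rcases hxN with h | h
        · simp [lowSeq] at h; omega
        · rw [h] at hlast; exact absurd hlast (by simp)
      have hcc : c = N - 1 := by omega
      have hmc : minusCount N (lowSeq N c) = 1 := by rw [minusCount_lowSeq]; omega
      have hx2odd : x2 % 2 = 1 := by
        by_contra h0
        have h0' : x2 % 2 = 0 := by omega
        rw [memMD, if_pos h0'] at hx
        rw [BspPlus, hmc] at hx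
        simp at hx
      have hx0 : lowSeq N c ⟨0, by omega⟩ = true := by simp [lowSeq]; omega
      have hH0 := H 0 (by omega)
      rw [tfSD, if_pos rfl] at hH0
      dsimp only at hH0
      have hz : ¬ hZero N ((lowSeq N c, x2) : MSeq N) = 0 := by
        rw [hZero, dif_pos (show 1 ≤ N by omega), if_pos hx0]
        omega
      rw [if_neg hz, Option.map_eq_none_iff] at hH0
      rw [fSD, if_pos rfl, dif_pos (show 1 ≤ N by omega),
        if_pos ⟨hx0, by omega⟩] at hH0
      exact absurd hH0 (by simp)
    have hxtop : lowSeq N c = top N := by rw [hc_eq, ← top_eq_lowSeq]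
    rw [hxtop] at H hx ⊢
    -- x2 = 0
    have hx2 : x2 = 0 := by
      by_contra h2
      have hx0 : top N ⟨0, by omega⟩ = true := rfl
      have hH0 := H 0 (by omega)
      rw [tfSD, if_pos rfl] at hH0
      dsimp only at hH0
      have hz : ¬ hZero N ((top N, x2) : MSeq N) = 0 := by
        rw [hZero, dif_pos (show 1 ≤ N by omega), if_pos hx0]
        omega
      rw [if_neg hz, Option.map_eq_none_iff] at hH0
      rw [fSD, if_pos rfl, dif_pos (show 1 ≤ N by omega),
        if_pos ⟨hx0, by omega⟩] at hH0
      exact absurd hH0 (by simp)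
    subst hx2
    refine ⟨rfl, ?_⟩
    -- condition from f_0 on y
    have hy0 : ¬(y1 ⟨0, by omega⟩ = true ∧ 1 ≤ y2) := by
      have hH0 := H 0 (by omega)
      rw [tfSD, if_pos rfl] at hH0
      dsimp only at hH0
      rw [if_pos (hZero_top N (by omega) 0), Option.map_eq_none_iff] at hH0
      rw [fSD, if_pos rfl, dif_pos (show 1 ≤ N by omega)] at hH0
      intro hcnd
      rw [if_pos hcnd] at hH0
      exact absurd hH0 (by simp)
    -- shape of y
    have hy1 : ∀ l (h1 : 1 ≤ l) (h2 : l + 1 ≤ N),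
        ((y1, y2) : MSeq N).1 ⟨l - 1, by omega⟩ = true ∨
          ((y1, y2) : MSeq N).1 ⟨l, by omega⟩ = false := by
      intro l h1 h2
      have hxe : eSD N l ((top N, 0) : MSeq N) = none := by
        rw [eSD_ne_zero N l (by omega), eD_top_lt N l h1 h2]
        rfl
      have h := tfSD_none_snd N l (by omega) _ _ hxe (H l (by omega))
      rwa [fD_none_iff_lt N l h1 h2] at h
    obtain ⟨c, hcN, hyc⟩ := eq_lowSeq N y1 hy1
    subst hyc
    rcases Nat.eq_zero_or_pos c with rfl | hcpos
    · -- y1 = bot, y2 even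
      have hmc : minusCount N (lowSeq N 0) = N := by rw [minusCount_lowSeq]; omega
      have hy2 : y2 % 2 = 0 := by
        by_contra h
        rw [memMD, if_neg h, BspMinus, hmc] at hy
        exact (Nat.not_odd_iff_even.mpr hEven) hy
      left
      refine ⟨y2 / 2, ?_⟩
      have h22 : y2 = 2 * (y2 / 2) := by omega
      rw [bot_eq_lowSeq, ← h22]
    · -- c ≥ 1 : y2 = 0
      have hy10 : lowSeq N c ⟨0, by omega⟩ = true := by simp [lowSeq]; omega
      have hy2 : y2 = 0 := by
        by_contra h
        exact hy0 ⟨hy10, by omega⟩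
      subst hy2
      have hev : Even (N - c) := by
        have h0 : ((lowSeq N c, 0) : MSeq N).2 % 2 = 0 := rfl
        rw [memMD, if_pos h0, BspPlus, minusCount_lowSeq] at hy
        exact hy
      have hevc : Even c := ((Nat.even_sub hcN).mp hev).mp hEven
      rcases eq_or_lt_of_le hcN with rfl | hlt
      · right; right
        rw [← top_eq_lowSeq]
      · right; left
        obtain ⟨i, hi⟩ := hevc
        obtain ⟨j, hj⟩ := hEven
        refine ⟨i, by omega, by omega, ?_⟩
        have h2i : 2 * i = c := by omega
        rw [h2i]
  · rintro ⟨hxx, hyy⟩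
    rw [Prod.mk.injEq] at hxx
    obtain ⟨rfl, rfl⟩ := hxx
    rcases hyy with ⟨k, hk⟩ | ⟨i, hi1, hi2, hk⟩ | hk <;>
      rw [Prod.mk.injEq] at hk <;> obtain ⟨rfl, rfl⟩ := hk
    · rw [bot_eq_lowSeq]
      exact reverse_case N hN 0 (2 * k) (Or.inl rfl)
    · exact reverse_case N hN (2 * i) 0 (Or.inr rfl)
    · have h := reverse_case N hN N 0 (Or.inr rfl)
      rwa [← top_eq_lowSeq] at h


end CrystalPaper
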